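/- Let g: ℝ → (−∞,+∞] satisfy g*(−x) = g(x) ≥ 0 for every x ∈ ℝ, and let q: ℝ → ℝ, q(x) = ½x². Then the function F: ℝ² → (−∞,+∞] defined by F(x,y) = q((x+y)/√2) + g((x−y)/√2) is an autoconjugate representer for the identity operator Id: ℝ → ℝ, x ↦ x; that is, F*(y,x) = F(x,y) for all (x,y) ∈ ℝ², and F(x,y) = xy if and only if y = x. -/

import Mathlib

noncomputable section
open scoped Classical

/-- The Fenchel conjugate of `g : ℝ → (-∞,+∞]`: `g*(y) = sup_x (xy - g(x))`. -/
def rconj (g : ℝ → EReal) : ℝ → EReal :=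
  fun y => ⨆ x : ℝ, ((x * y : ℝ) : EReal) - g x

/-- The Fenchel conjugate of `F : ℝ × ℝ → (-∞,+∞]`:
`F*(y,x) = sup_{(u,v)} (uy + vx - F(u,v))`. -/
def rconj2 (F : ℝ × ℝ → EReal) : ℝ × ℝ → EReal :=
  fun p => ⨆ q : ℝ × ℝ, ((q.1 * p.1 + q.2 * p.2 : ℝ) : EReal) - F q

private lemma ereal_cases (a : EReal) (h : a ≠ ⊥) : a = ⊤ ∨ ∃ r : ℝ, a = (r : EReal) := by
  induction a with
  | bot => exact absurd rfl h
  | coe r => exact Or.inr ⟨r, rfl⟩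
  | top => exact Or.inl rfl

private lemma add_iSup_le {c : ℝ} {f : ℝ → EReal} {S : EReal}
    (h : ∀ t, (c : EReal) + f t ≤ S) : (c : EReal) + ⨆ t, f t ≤ S := by
  have h1 : (⨆ t, f t) ≤ S - (c : EReal) := by
    refine iSup_le fun t => ?_
    refine (EReal.le_sub_iff_add_le (Or.inl (EReal.coe_ne_bot c))
      (Or.inl (EReal.coe_ne_top c))).2 ?_
    rw [add_comm]; exact h t
  have := (EReal.le_sub_iff_add_le (Or.inl (EReal.coe_ne_bot c))
      (Or.inl (EReal.coe_ne_top c))).1 h1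
  rwa [add_comm] at this

private lemma key_id {r2 : ℝ} (h : r2 * r2 = 2) (u v x y : ℝ) :
    (u + v) / r2 * ((x + y) / r2) - (u - v) / r2 * ((x - y) / r2) = u * y + v * x := by
  rw [div_mul_div_comm, div_mul_div_comm, h]
  have h0 : r2 ≠ 0 := by intro h0; rw [h0] at h; norm_num at h
  ring

theorem stmt11 (g : ℝ → EReal) (hbot : ∀ x, g x ≠ ⊥)
    (hg : ∀ x : ℝ, rconj g (-x) = g x ∧ 0 ≤ g x)
    (F : ℝ × ℝ → EReal)
    (hF : ∀ x y : ℝ,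
      F (x, y) = ((1 / 2 * ((x + y) / Real.sqrt 2) ^ 2 : ℝ) : EReal)
        + g ((x - y) / Real.sqrt 2)) :
    (∀ x y : ℝ, rconj2 F (y, x) = F (x, y)) ∧
    (∀ x y : ℝ, F (x, y) = ((x * y : ℝ) : EReal) ↔ y = x) := by
  set r2 : ℝ := Real.sqrt 2 with hr2def
  have h2 : r2 * r2 = 2 := Real.mul_self_sqrt (by norm_num)
  have h0 : r2 ≠ 0 := by intro h0; rw [h0] at h2; norm_num at h2
  -- g 0 = 0
  have hg0 : g 0 = 0 := by
    refine le_antisymm ?_ (hg 0).2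
    have := (hg 0).1
    rw [neg_zero] at this
    rw [← this, rconj]
    refine iSup_le fun t => ?_
    rcases ereal_cases (g t) (hbot t) with htop | ⟨r, hr⟩
    · rw [htop, EReal.sub_top]; exact bot_le
    · have h0r : 0 ≤ r := by
        have := (hg t).2; rw [hr] at this; exact EReal.coe_nonneg.1 this
      rw [hr, ← EReal.coe_sub]
      exact_mod_cast (by nlinarith : t * 0 - r ≤ (0 : ℝ))
  refine ⟨?_, ?_⟩
  · intro x y
    set σ : ℝ := (x + y) / r2 with hσ
    set τ : ℝ := (x - y) / r2 with hτ
    apply le_antisymm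
    · -- upper bound
      refine iSup_le fun p => ?_
      obtain ⟨u, v⟩ := p
      rw [hF u v, hF x y]
      set s : ℝ := (u + v) / r2 with hs
      set t : ℝ := (u - v) / r2 with ht
      rcases ereal_cases (g t) (hbot t) with htop | ⟨r, hr⟩
      · rw [htop, EReal.coe_add_top, EReal.sub_top]
        exact bot_le
      · have hgτ : ((t * -τ : ℝ) : EReal) - g t ≤ g τ := by
          rw [← (hg τ).1, rconj]
          exact le_iSup (fun z => ((z * -τ : ℝ) : EReal) - g z) t
        rw [hr, ← EReal.coe_sub] at hgτ
        rw [hr, ← EReal.coe_add, ← EReal.coe_sub]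
        calc ((u * y + v * x - (1 / 2 * s ^ 2 + r) : ℝ) : EReal)
            ≤ ((1 / 2 * σ ^ 2 : ℝ) : EReal) + ((t * -τ - r : ℝ) : EReal) := by
              rw [← EReal.coe_add]
              apply EReal.coe_le_coe_iff.2
              have hid := key_id h2 u v x y
              nlinarith [sq_nonneg (s - σ)]
          _ ≤ ((1 / 2 * σ ^ 2 : ℝ) : EReal) + g τ := add_le_add_right hgτ _
    · -- lower bound
      rw [hF x y]
      have hgτ : g τ = ⨆ t : ℝ, ((t * -τ : ℝ) : EReal) - g t := by
        rw [← (hg τ).1, rconj]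
      rw [hgτ]
      refine add_iSup_le fun t => ?_
      have hle : ((1 / 2 * σ ^ 2 : ℝ) : EReal) + (((t * -τ : ℝ) : EReal) - g t)
          ≤ ((r2 * (σ + t) / 2) * y + (r2 * (σ - t) / 2) * x : ℝ) - F (r2 * (σ + t) / 2, r2 * (σ - t) / 2) := by
        have hsum : (r2 * (σ + t) / 2 + r2 * (σ - t) / 2) / r2 = σ := by
          field_simp; ring
        have hdiff : (r2 * (σ + t) / 2 - r2 * (σ - t) / 2) / r2 = t := by
          field_simp; ring
        rw [hF, hsum, hdiff]
        have huv : r2 * (σ + t) / 2 * y + r2 * (σ - t) / 2 * x = σ * σ - t * τ := by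
          have := key_id h2 (r2 * (σ + t) / 2) (r2 * (σ - t) / 2) x y
          rw [hsum, hdiff] at this
          linarith [this]
        rw [huv]
        rcases ereal_cases (g t) (hbot t) with htop | ⟨r, hr⟩
        · rw [htop, EReal.sub_top, EReal.add_bot, EReal.coe_add_top, EReal.sub_top]
        · rw [hr, ← EReal.coe_sub, ← EReal.coe_add, ← EReal.coe_add, ← EReal.coe_sub]
          apply EReal.coe_le_coe_iff.2
          nlinarith [sq_nonneg σ]
      calc _ ≤ _ := hle
        _ ≤ rconj2 F (y, x) := le_iSup
            (fun q : ℝ × ℝ => ((q.1 * y + q.2 * x : ℝ) : EReal) - F q)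
            (r2 * (σ + t) / 2, r2 * (σ - t) / 2)
  · intro x y
    rw [hF x y]
    constructor
    · intro h
      set τ : ℝ := (x - y) / r2 with hτ
      rcases ereal_cases (g τ) (hbot τ) with htop | ⟨r, hr⟩
      · rw [htop, EReal.coe_add_top] at h
        exact absurd h.symm (EReal.coe_ne_top _)
      · rw [hr, ← EReal.coe_add] at h
        have heq : 1 / 2 * ((x + y) / r2) ^ 2 + r = x * y := EReal.coe_eq_coe_iff.1 h
        have h0r : 0 ≤ r := by
          have := (hg τ).2; rw [hr] at this; exact EReal.coe_nonneg.1 this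
        have hsq : ((x + y) / r2) ^ 2 = (x + y) ^ 2 / 2 := by
          rw [div_pow, sq r2, h2]
        rw [hsq] at heq
        nlinarith [sq_nonneg (x - y)]
    · intro h
      rw [h]
      have hτ0 : (x - x) / r2 = 0 := by rw [sub_self, zero_div]
      rw [hτ0, hg0, add_zero]
      congr 1
      rw [div_pow, sq r2, h2]
      ring
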